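/- Let K be a field, let d ≤ n, and let N be a d×n matrix over K whose submatrix of columns 1, …, d is the d×d identity matrix. Let v = {1,…,d}, let C ⊆ ℝⁿ be a matroidal cone, and suppose the rank polytope of N equals (e_v + C) ∩ Δ_{d,n}, where e_v = e₁ + ⋯ + e_d. Then for all i with 1 ≤ i ≤ d and all j with j ≠ i and N_{ij} ≠ 0, we have e_j − e_i ∈ C. -/
import Mathlib


noncomputable section

/-- The standard basis vector `eᵢ` of `ℝⁿ`. -/
def eVec (n : ℕ) (i : Fin n) : Fin n → ℝ := Pi.single i 1

/-- A matroidal cone in `ℝⁿ`: the convex cone generated by finitely many vectors of the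
form `eᵢ − eⱼ` with `i ≠ j`. -/
def IsMatroidalCone {n : ℕ} (C : Set (Fin n → ℝ)) : Prop :=
  ∃ S : Finset (Fin n × Fin n), (∀ p ∈ S, p.1 ≠ p.2) ∧
    C = {x | ∃ c : Fin n × Fin n → ℝ, (∀ p, 0 ≤ c p) ∧
      x = ∑ p ∈ S, c p • (eVec n p.1 - eVec n p.2)}

/-- The rank polytope of a `d × n` matrix over a field `K`: the convex hull of the
vectors `e_B` over `d`-element column sets `B` with linearly independent columns. -/
def rankPolytope {K : Type*} [Field K] {d n : ℕ} (N : Matrix (Fin d) (Fin n) K) :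
    Set (Fin n → ℝ) :=
  convexHull ℝ {x | ∃ B : Finset (Fin n), B.card = d ∧
    LinearIndependent K (fun i : B => N.transpose (i : Fin n)) ∧
    x = ∑ i ∈ B, eVec n i}

/-- The hypersimplex `Δ_{d,n}`. -/
def hypersimplex (d n : ℕ) : Set (Fin n → ℝ) :=
  {x | (∀ i, 0 ≤ x i ∧ x i ≤ 1) ∧ ∑ i, x i = d}

/-- If the first `d` columns of `N` form the identity and the rank polytope of `N` is the
cone-like polytope `(e_v + C) ∩ Δ` with `v = {1,…,d}`, then every nonzero off-diagonal
entry `N_{ij}` forces `e_j − e_i ∈ C`. -/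
theorem entry_ne_zero_mem_cone {K : Type*} [Field K] {d n : ℕ} (hdn : d ≤ n)
    (N : Matrix (Fin d) (Fin n) K)
    (hid : ∀ i j : Fin d, N i (Fin.castLE hdn j) = if i = j then 1 else 0)
    (C : Set (Fin n → ℝ)) (hC : IsMatroidalCone C)
    (hpoly : rankPolytope N =
      ((fun x => (fun i : Fin n => if (i : ℕ) < d then (1 : ℝ) else 0) + x) '' C) ∩
        hypersimplex d n) :
    ∀ (i : Fin d) (j : Fin n), (j : ℕ) ≠ (i : ℕ) → N i j ≠ 0 →
      eVec n j - eVec n (Fin.castLE hdn i) ∈ C := by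
  intro i j hji hN
  set ci : Fin n := Fin.castLE hdn i with hci
  -- j is not among the first d coordinates
  have hjd : ¬ ((j : ℕ) < d) := by
    intro h
    apply hN
    have hj : j = Fin.castLE hdn ⟨(j : ℕ), h⟩ := by
      apply Fin.ext; simp
    rw [hj, hid, if_neg]
    intro e
    exact hji (by rw [e])
  set E : Finset (Fin n) := (Finset.univ.image (Fin.castLE hdn)).erase ci with hE
  set B : Finset (Fin n) := insert j E with hB
  have hmemE : ∀ b, b ∈ E ↔ ∃ k : Fin d, Fin.castLE hdn k = b ∧ k ≠ i := by
    intro b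
    simp only [hE, Finset.mem_erase, Finset.mem_image, Finset.mem_univ, true_and]
    constructor
    · rintro ⟨hne, k, rfl⟩
      exact ⟨k, rfl, fun e => hne (by rw [e])⟩
    · rintro ⟨k, rfl, hk⟩
      exact ⟨fun e => hk (Fin.castLE_injective hdn e), k, rfl⟩
  have hjE : j ∉ E := by
    rw [hmemE]
    rintro ⟨k, rfl, -⟩
    exact hjd (by simpa using k.isLt)
  have hcard : B.card = d := by
    have h1 : (Finset.univ.image (Fin.castLE hdn)).card = d := by
      rw [Finset.card_image_of_injective _ (Fin.castLE_injective hdn)]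
      simp
    have h2 : ci ∈ Finset.univ.image (Fin.castLE hdn) :=
      Finset.mem_image.2 ⟨i, Finset.mem_univ i, rfl⟩
    rw [hB, Finset.card_insert_of_notMem hjE, hE, Finset.card_erase_of_mem h2, h1]
    exact Nat.succ_pred_eq_of_pos i.pos
  -- linear independence of the columns indexed by B
  have hLI : LinearIndependent K (fun b : B => N.transpose (b : Fin n)) := by
    rw [Fintype.linearIndependent_iff]
    intro g hg
    set G : Fin n → K := fun x => if h : x ∈ B then g ⟨x, h⟩ else 0 with hG
    have hsum : ∀ r : Fin d, ∑ b ∈ B, G b * N r b = 0 := by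
      intro r
      have h := congrFun hg r
      simp only [Finset.sum_apply, Pi.smul_apply, Matrix.transpose_apply,
        smul_eq_mul, Pi.zero_apply] at h
      rw [← h, ← Finset.sum_coe_sort B (fun b => G b * N r b)]
      refine Finset.sum_congr rfl fun b _ => ?_
      rw [hG]
      simp [dif_pos b.2]
    have hGj : G j = 0 := by
      have h0 := hsum i
      rw [hB, Finset.sum_insert hjE] at h0
      have hz : ∑ b ∈ E, G b * N i b = 0 := by
        refine Finset.sum_eq_zero fun b hb => ?_
        obtain ⟨k, rfl, hk⟩ := (hmemE b).1 hb
        rw [hid, if_neg (fun e => hk e.symm), mul_zero]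
      rw [hz, add_zero] at h0
      exact (mul_eq_zero.1 h0).resolve_right hN
    have hGE : ∀ b0 ∈ E, G b0 = 0 := by
      intro b0 hb0
      obtain ⟨k, rfl, hk⟩ := (hmemE b0).1 hb0
      have h1 := hsum k
      rw [hB, Finset.sum_insert hjE, hGj, zero_mul, zero_add] at h1
      rw [Finset.sum_eq_single_of_mem _ hb0 (fun b hb hne => ?_)] at h1
      · rwa [hid, if_pos rfl, mul_one] at h1
      · obtain ⟨k', rfl, -⟩ := (hmemE b).1 hb
        rw [hid, if_neg, mul_zero]
        intro e
        exact hne (by rw [e])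
    intro b
    have hb : (b : Fin n) = j ∨ (b : Fin n) ∈ E := Finset.mem_insert.1 b.2
    have h2 : G (b : Fin n) = 0 := by
      rcases hb with hb | hb
      · rw [hb]; exact hGj
      · exact hGE _ hb
    rw [hG] at h2
    simpa using h2
  -- the vertex e_B is in the rank polytope
  have hxmem : (∑ b ∈ B, eVec n b) ∈ rankPolytope N :=
    subset_convexHull ℝ _ ⟨B, hcard, hLI, rfl⟩
  rw [hpoly] at hxmem
  obtain ⟨⟨c, hcC, hc⟩, -⟩ := hxmem
  have hmemB : ∀ r : Fin n, r ∈ B ↔ (r = j ∨ ((r : ℕ) < d ∧ r ≠ ci)) := by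
    intro r
    rw [hB, Finset.mem_insert, hmemE]
    constructor
    · rintro (rfl | ⟨k, rfl, hk⟩)
      · exact Or.inl rfl
      · exact Or.inr ⟨by simpa using k.isLt, fun e => hk (Fin.castLE_injective hdn e)⟩
    · rintro (rfl | ⟨hr, hrc⟩)
      · exact Or.inl rfl
      · refine Or.inr ⟨⟨(r : ℕ), hr⟩, Fin.ext (by simp), fun e => hrc ?_⟩
        rw [hci, ← e]
        exact Fin.ext (by simp)
  have hceq : c = eVec n j - eVec n ci := by
    funext r
    have hr := congrFun hc r
    simp only [Pi.add_apply, Finset.sum_apply] at hr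
    have hsum : ∑ b ∈ B, eVec n b r = if r ∈ B then (1 : ℝ) else 0 := by
      rw [← Finset.sum_ite_eq B r (fun _ => (1 : ℝ))]
      refine Finset.sum_congr rfl fun b _ => ?_
      simp [eVec, Pi.single_apply]
    rw [hsum] at hr
    have hcir : (ci : ℕ) = (i : ℕ) := by simp [hci]
    have goal : c r = (if r = j then (1:ℝ) else 0) - (if r = ci then (1:ℝ) else 0) := by
      by_cases h1 : r = j
      · have hrd : ¬ (r : ℕ) < d := by rw [h1]; exact hjd
        have hrc : r ≠ ci := by
          intro e; apply hrd; rw [e, hcir]; exact i.isLt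
        rw [if_pos ((hmemB r).2 (Or.inl h1)), if_neg hrd] at hr
        rw [if_pos h1, if_neg hrc]
        linarith
      · by_cases h2 : r = ci
        · have hrd : (r : ℕ) < d := by rw [h2, hcir]; exact i.isLt
          have hrB : r ∉ B := by
            rw [hmemB]
            rintro (h | ⟨-, h⟩)
            · exact h1 h
            · exact h h2
          rw [if_neg hrB, if_pos hrd] at hr
          rw [if_neg h1, if_pos h2]
          linarith
        · by_cases h3 : (r : ℕ) < d
          · rw [if_pos ((hmemB r).2 (Or.inr ⟨h3, h2⟩)), if_pos h3] at hr
            rw [if_neg h1, if_neg h2]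
            linarith
          · have hrB : r ∉ B := by
              rw [hmemB]
              rintro (h | ⟨h, -⟩)
              · exact h1 h
              · exact h3 h
            rw [if_neg hrB, if_neg h3] at hr
            rw [if_neg h1, if_neg h2]
            linarith
    rw [goal]
    simp [eVec, Pi.single_apply]
  rwa [← hceq]
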